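/- Let w : ℝ → ℝ be defined by w(0) = 1 and w(t) = (√(1+48t) − 1)/(24t) for t ≠ 0, and define F₂(t) = w(t) · ( −14·(2−w(t))^{−4} + (700/9)·(2−w(t))^{−5} − (1540/9)·(2−w(t))^{−6} + (560/3)·(2−w(t))^{−7} − (910/9)·(2−w(t))^{−8} + (196/9)·(2−w(t))^{−9} ). Then for every natural number j, (−1)^j times the j-th iterated derivative of F₂ at 0 equals 12^j · j(j−1)(j−2) · ( ((2j)!/j!)·(7(2j+3)/1080) − 4^j·j!·(7/384) ). -/

import Mathlib

open Nat Finset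

noncomputable def gb : ℕ → ℝ
  | 0 => -7/288
  | 1 => 7/64
  | 2 => -7/576
  | 3 => -21/64
  | 4 => 35/192
  | 5 => 21/64
  | 6 => -133/576
  | 7 => -7/64
  | 8 => 49/576
  | _ => 0

lemma prod_negg (a : ℝ) (j : ℕ) :
    ∏ i ∈ range j, (-a - (i:ℝ)) = (-1)^j * ∏ i ∈ range j, (a + (i:ℝ)) := by
  induction j with
  | zero => simp
  | succ j ih => rw [prod_range_succ, prod_range_succ, ih]; ring

lemma prod_shift (a : ℝ) (j : ℕ) :
    (∏ i ∈ range j, (a + 1 + (i:ℝ))) * a = (∏ i ∈ range j, (a + (i:ℝ))) * (a + j) := by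
  induction j with
  | zero => simp [mul_comm]
  | succ j ih =>
    rw [prod_range_succ, prod_range_succ]
    push_cast
    linear_combination (a + 1 + (j:ℝ)) * ih

lemma fact_prod (j : ℕ) : ((j ! : ℕ) : ℝ) = ∏ i ∈ range j, (1 + (i:ℝ)) := by
  induction j with
  | zero => simp
  | succ j ih => rw [prod_range_succ, ← ih, factorial_succ]; push_cast; ring

lemma two_fact (j : ℕ) :
    (((2*j)! : ℕ) : ℝ) = 4^j * ((j ! : ℕ) : ℝ) * ∏ i ∈ range j, ((1:ℝ)/2 + i) := by
  induction j with
  | zero => simp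
  | succ j ih =>
    have h : 2 * (j+1) = (2*j+1) + 1 := by ring
    rw [h, factorial_succ, factorial_succ, factorial_succ, prod_range_succ]
    push_cast
    linear_combination (2*(j:ℝ)+2)*(2*(j:ℝ)+1)*ih

lemma iterG (j : ℕ) : ∀ t : ℝ, 0 < 1 + 48*t →
    iteratedDeriv j (fun x : ℝ => ∑ m ∈ range 9, gb m * (1+48*x) ^ (-((m:ℝ)+1)/2)) t
      = ∑ m ∈ range 9, gb m * 48^j * (∏ i ∈ range j, (-((m:ℝ)+1)/2 - i))
          * (1+48*t) ^ (-((m:ℝ)+1)/2 - j) := by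
  induction j with
  | zero =>
    intro t ht
    simp [iteratedDeriv_zero]
  | succ j ih =>
    intro t ht
    rw [iteratedDeriv_succ]
    have hopen : IsOpen {x : ℝ | 0 < 1 + 48*x} := by
      have : Continuous fun x : ℝ => 1 + 48*x := by continuity
      exact isOpen_lt continuous_const this
    have heq : iteratedDeriv j (fun x : ℝ => ∑ m ∈ range 9, gb m * (1+48*x) ^ (-((m:ℝ)+1)/2))
        =ᶠ[nhds t] fun u => ∑ m ∈ range 9, gb m * 48^j * (∏ i ∈ range j, (-((m:ℝ)+1)/2 - i))
          * (1+48*u) ^ (-((m:ℝ)+1)/2 - j) := by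
      filter_upwards [hopen.mem_nhds ht] with u hu
      exact ih u hu
    rw [heq.deriv_eq]
    have hbase : HasDerivAt (fun x : ℝ => 1 + 48*x) 48 t := by
      simpa using ((hasDerivAt_id t).const_mul (48:ℝ)).const_add 1
    have hd : HasDerivAt (fun u => ∑ m ∈ range 9, gb m * 48^j
          * (∏ i ∈ range j, (-((m:ℝ)+1)/2 - i)) * (1+48*u) ^ (-((m:ℝ)+1)/2 - j))
        (∑ m ∈ range 9, gb m * 48^j * (∏ i ∈ range j, (-((m:ℝ)+1)/2 - i))
          * (48 * (-((m:ℝ)+1)/2 - j) * (1+48*t) ^ (-((m:ℝ)+1)/2 - j - 1))) t := by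
      apply HasDerivAt.fun_sum
      intro m _
      exact (hbase.rpow_const (Or.inl (ne_of_gt ht))).const_mul _
    rw [hd.deriv]
    refine Finset.sum_congr rfl fun m _ => ?_
    rw [prod_range_succ]
    rw [show -((m:ℝ)+1)/2 - (j:ℝ) - 1 = -((m:ℝ)+1)/2 - ((j:ℕ)+1 : ℕ) by push_cast; ring]
    push_cast
    ring

lemma key_alg (s : ℝ) (h0 : s ≠ 0) (h1 : s + 1 ≠ 0) :
    2/(s+1) * (-14 * ((2*s/(s+1))^4)⁻¹ + 700/9 * ((2*s/(s+1))^5)⁻¹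
      - 1540/9 * ((2*s/(s+1))^6)⁻¹ + 560/3 * ((2*s/(s+1))^7)⁻¹
      - 910/9 * ((2*s/(s+1))^8)⁻¹ + 196/9 * ((2*s/(s+1))^9)⁻¹)
    = ∑ m ∈ range 9, gb m * (s ^ (m+1))⁻¹ := by
  have h2 : 2*s/(s+1) ≠ 0 := by
    apply div_ne_zero _ h1
    simpa using h0
  simp only [Finset.sum_range_succ, Finset.sum_range_zero, gb]
  push_cast
  field_simp
  ring

lemma F2_eq (w : ℝ → ℝ) (hw0 : w 0 = 1)
    (hw : ∀ t : ℝ, t ≠ 0 → w t = (Real.sqrt (1 + 48 * t) - 1) / (24 * t))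
    (F₂ : ℝ → ℝ)
    (hF₂ : F₂ = fun t => w t *
      (-14 * (2 - w t) ^ (-4 : ℤ) + (700 / 9) * (2 - w t) ^ (-5 : ℤ)
        - (1540 / 9) * (2 - w t) ^ (-6 : ℤ) + (560 / 3) * (2 - w t) ^ (-7 : ℤ)
        - (910 / 9) * (2 - w t) ^ (-8 : ℤ) + (196 / 9) * (2 - w t) ^ (-9 : ℤ)))
    (x : ℝ) (hx : 0 < 1 + 48*x) :
    F₂ x = ∑ m ∈ range 9, gb m * (1+48*x) ^ (-((m:ℝ)+1)/2) := by
  set s : ℝ := Real.sqrt (1 + 48*x) with hsdef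
  have hsnn : (0:ℝ) ≤ 1 + 48*x := le_of_lt hx
  have hs2 : s^2 = 1 + 48*x := Real.sq_sqrt hsnn
  have hs0 : 0 < s := Real.sqrt_pos.mpr hx
  have hs0' : s ≠ 0 := ne_of_gt hs0
  have hsp1 : s + 1 ≠ 0 := by positivity
  have hpow : ∀ m : ℕ, (1+48*x) ^ (-((m:ℝ)+1)/2) = (s ^ (m+1))⁻¹ := by
    intro m
    rw [show (-((m:ℝ)+1)/2) = (1/2 : ℝ) * (-(((m:ℕ)+1 : ℕ) : ℝ)) by push_cast; ring,
      Real.rpow_mul hsnn, ← Real.sqrt_eq_rpow, ← hsdef,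
      ← Real.rpow_natCast s (m+1), ← Real.rpow_neg (le_of_lt hs0),
      Real.rpow_neg (le_of_lt hs0), Real.rpow_natCast]
  have hGsum : ∑ m ∈ range 9, gb m * (1+48*x) ^ (-((m:ℝ)+1)/2)
      = ∑ m ∈ range 9, gb m * (s ^ (m+1))⁻¹ :=
    Finset.sum_congr rfl fun m _ => by rw [hpow m]
  rw [hGsum]
  by_cases hx0 : x = 0
  · subst hx0
    have hs1 : s = 1 := by simp [hsdef]
    rw [hF₂]
    simp only [hw0, hs1]
    norm_num [Finset.sum_range_succ, gb]
  · have hwx : w x = 2 / (s + 1) := by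
      rw [hw x hx0, show (1 + 48 * x : ℝ) = 1 + 48*x by ring, ← hsdef,
        div_eq_div_iff (mul_ne_zero (by norm_num) hx0) hsp1]
      linear_combination hs2
    have h2w : 2 - w x = 2*s/(s+1) := by
      rw [hwx]
      field_simp
      ring
    simp only [hF₂]
    rw [h2w, hwx]
    rw [show (-4:ℤ) = -(4:ℕ) by norm_num, show (-5:ℤ) = -(5:ℕ) by norm_num,
      show (-6:ℤ) = -(6:ℕ) by norm_num, show (-7:ℤ) = -(7:ℕ) by norm_num,
      show (-8:ℤ) = -(8:ℕ) by norm_num, show (-9:ℤ) = -(9:ℕ) by norm_num]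
    simp only [zpow_neg, zpow_natCast]
    exact key_alg s hs0' hsp1

/-- Count of 2-legged 4-valent genus-2 maps (g = 2 row of Table 1): with `w` the branch
of the string equation `1 = w + 12 t w²` with `w(0) = 1`, and `F₂(t) = z₂(w(t))`,
`(-1)^j F₂^{(j)}(0) = 12^j j(j-1)(j-2) ((2j)!/j! · 7(2j+3)/1080 - 4^j j! · 7/384)`. -/
theorem two_legged_genus_two_counts
    (w : ℝ → ℝ) (hw0 : w 0 = 1)
    (hw : ∀ t : ℝ, t ≠ 0 → w t = (Real.sqrt (1 + 48 * t) - 1) / (24 * t))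
    (F₂ : ℝ → ℝ)
    (hF₂ : F₂ = fun t => w t *
      (-14 * (2 - w t) ^ (-4 : ℤ) + (700 / 9) * (2 - w t) ^ (-5 : ℤ)
        - (1540 / 9) * (2 - w t) ^ (-6 : ℤ) + (560 / 3) * (2 - w t) ^ (-7 : ℤ)
        - (910 / 9) * (2 - w t) ^ (-8 : ℤ) + (196 / 9) * (2 - w t) ^ (-9 : ℤ))) :
    ∀ j : ℕ, (-1) ^ j * iteratedDeriv j F₂ 0 =
      12 ^ j * (∏ k ∈ Finset.range 3, ((j : ℝ) - (k : ℝ))) *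
        (((2 * j)! : ℝ) / (j ! : ℝ) * (7 * (2 * (j : ℝ) + 3) / 1080)
          - 4 ^ j * (j ! : ℝ) * (7 / 384)) := by
  intro j
  -- replace F₂ by G near 0
  have hopen : IsOpen {x : ℝ | 0 < 1 + 48*x} := by
    have : Continuous fun x : ℝ => 1 + 48*x := by continuity
    exact isOpen_lt continuous_const this
  have hFG : F₂ =ᶠ[nhds (0:ℝ)]
      fun x : ℝ => ∑ m ∈ range 9, gb m * (1+48*x) ^ (-((m:ℝ)+1)/2) := by
    filter_upwards [hopen.mem_nhds (by norm_num : (0:ℝ) ∈ {x | 0 < 1 + 48*x})] with x hx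
    exact F2_eq w hw0 hw F₂ hF₂ x hx
  rw [hFG.iteratedDeriv_eq j]
  -- pull the sign inside and simplify the products
  have hstep : ∀ m : ℕ, ∏ i ∈ range j, (-((m:ℝ)+1)/2 - (i:ℝ))
      = (-1)^j * ∏ i ∈ range j, (((m:ℝ)+1)/2 + (i:ℝ)) := by
    intro m
    rw [← prod_negg (((m:ℝ)+1)/2) j]
    exact prod_congr rfl fun i _ => by ring
  have hG0 : (-1:ℝ)^j * iteratedDeriv j
        (fun x : ℝ => ∑ m ∈ range 9, gb m * (1+48*x) ^ (-((m:ℝ)+1)/2)) 0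
      = ∑ m ∈ range 9, gb m * 48^j * (∏ i ∈ range j, (((m:ℝ)+1)/2 + (i:ℝ))) := by
    rw [iterG j 0 (by norm_num), Finset.mul_sum]
    refine sum_congr rfl fun m _ => ?_
    rw [show (1:ℝ) + 48*0 = 1 by norm_num, Real.one_rpow, mul_one, hstep m]
    have hs1 : ((-1:ℝ))^j * ((-1:ℝ))^j = 1 := by rw [← mul_pow]; norm_num
    linear_combination (gb m * 48^j * ∏ i ∈ range j, (((m:ℝ)+1)/2 + (i:ℝ))) * hs1
  rw [hG0]
  -- compute the nine rising-factorial products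
  have c0 : ∏ i ∈ range j, ((((0:ℕ):ℝ)+1)/2 + (i:ℝ)) = ∏ i ∈ range j, ((1:ℝ)/2 + (i:ℝ)) :=
    prod_congr rfl fun i _ => by norm_num
  have c1 : ∏ i ∈ range j, ((((1:ℕ):ℝ)+1)/2 + (i:ℝ)) = ((j !: ℕ) : ℝ) := by
    rw [fact_prod]; exact prod_congr rfl fun i _ => by norm_num
  have sh : ∀ a : ℝ, (∏ i ∈ range j, (a + 1 + (i:ℝ))) * a
      = (∏ i ∈ range j, (a + (i:ℝ))) * (a + j) := fun a => prod_shift a j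
  have cg : ∀ a b : ℝ, a = b + 1 →
      ∏ i ∈ range j, (a + (i:ℝ)) = ∏ i ∈ range j, (b + 1 + (i:ℝ)) :=
    fun a b h => prod_congr rfl fun i _ => by rw [h]
  have p3 : ∏ i ∈ range j, ((3:ℝ)/2 + (i:ℝ))
      = 2*(∏ i ∈ range j, ((1:ℝ)/2 + (i:ℝ)))*(1/2+(j:ℝ)) := by
    rw [cg (3/2) (1/2) (by norm_num)]
    linear_combination 2 * sh (1/2)
  have p2 : ∏ i ∈ range j, ((2:ℝ) + (i:ℝ)) = ((j ! : ℕ):ℝ)*(1+(j:ℝ)) := by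
    rw [cg 2 1 (by norm_num)]
    linear_combination sh 1 - (1+(j:ℝ)) * fact_prod j
  have p5 : ∏ i ∈ range j, ((5:ℝ)/2 + (i:ℝ))
      = (4/3)*(∏ i ∈ range j, ((1:ℝ)/2 + (i:ℝ)))*(1/2+(j:ℝ))*(3/2+(j:ℝ)) := by
    rw [cg (5/2) (3/2) (by norm_num)]
    linear_combination (2/3) * sh (3/2) + (2/3)*(3/2+(j:ℝ)) * p3
  have p3' : ∏ i ∈ range j, ((3:ℝ) + (i:ℝ)) = ((j ! : ℕ):ℝ)*(1+(j:ℝ))*(2+(j:ℝ))/2 := by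
    rw [cg 3 2 (by norm_num)]
    linear_combination (1/2) * sh 2 + (1/2)*(2+(j:ℝ)) * p2
  have p7 : ∏ i ∈ range j, ((7:ℝ)/2 + (i:ℝ))
      = (8/15)*(∏ i ∈ range j, ((1:ℝ)/2 + (i:ℝ)))*(1/2+(j:ℝ))*(3/2+(j:ℝ))*(5/2+(j:ℝ)) := by
    rw [cg (7/2) (5/2) (by norm_num)]
    linear_combination (2/5) * sh (5/2) + (2/5)*(5/2+(j:ℝ)) * p5
  have p4 : ∏ i ∈ range j, ((4:ℝ) + (i:ℝ))
      = ((j ! : ℕ):ℝ)*(1+(j:ℝ))*(2+(j:ℝ))*(3+(j:ℝ))/6 := by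
    rw [cg 4 3 (by norm_num)]
    linear_combination (1/3) * sh 3 + (1/3)*(3+(j:ℝ)) * p3'
  have p9 : ∏ i ∈ range j, ((9:ℝ)/2 + (i:ℝ))
      = (16/105)*(∏ i ∈ range j, ((1:ℝ)/2 + (i:ℝ)))
          *(1/2+(j:ℝ))*(3/2+(j:ℝ))*(5/2+(j:ℝ))*(7/2+(j:ℝ)) := by
    rw [cg (9/2) (7/2) (by norm_num)]
    linear_combination (2/7) * sh (7/2) + (2/7)*(7/2+(j:ℝ)) * p7
  have d : ∀ m : ℕ, ∀ b : ℝ, ((m:ℝ)+1)/2 = b →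
      ∏ i ∈ range j, (((m:ℝ)+1)/2 + (i:ℝ)) = ∏ i ∈ range j, (b + (i:ℝ)) :=
    fun m b h => prod_congr rfl fun i _ => by rw [h]
  simp only [Finset.sum_range_succ, Finset.sum_range_zero]
  rw [d 0 (1/2) (by norm_num), d 1 1 (by norm_num), d 2 (3/2) (by norm_num),
    d 3 2 (by norm_num), d 4 (5/2) (by norm_num), d 5 3 (by norm_num),
    d 6 (7/2) (by norm_num), d 7 4 (by norm_num), d 8 (9/2) (by norm_num)]
  rw [show gb 0 = -7/288 from rfl, show gb 1 = 7/64 from rfl, show gb 2 = -7/576 from rfl,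
    show gb 3 = -21/64 from rfl, show gb 4 = 35/192 from rfl, show gb 5 = 21/64 from rfl,
    show gb 6 = -133/576 from rfl, show gb 7 = -7/64 from rfl, show gb 8 = 49/576 from rfl]
  rw [show ∏ i ∈ range j, ((1:ℝ) + (i:ℝ)) = ((j ! : ℕ):ℝ) from (fact_prod j).symm]
  rw [p2, p3, p3', p4, p5, p7, p9]
  rw [Finset.prod_range_succ, Finset.prod_range_succ, Finset.prod_range_succ,
    Finset.prod_range_zero]
  rw [two_fact j]
  rw [show (48:ℝ)^j = 12^j*4^j by rw [← mul_pow]; norm_num]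
  have hK : ((j ! : ℕ):ℝ) ≠ 0 := Nat.cast_ne_zero.mpr (Nat.factorial_ne_zero j)
  field_simp
  ring
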